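/- arXiv:2004.00952 — 5 statements merged into one kernel-verified Lean document; each statement's English description precedes it below -/
import Mathlib

section
/- For any nonempty recursive generalized causal team T over σ in which every element has the same function component F (i.e. T = {(s,F) : s ∈ T⁻}), and any formula φ of CO⩗[σ] or COD[σ]: T ⊨^g φ if and only if T^c ⊨^c φ, where T^c := (T⁻, F) is the associated causal team. -/
open scoped Classical
set_option linter.unusedSectionVars false

noncomputable section

/-- Assignments of values to variables. -/
abbrev Asg (V : Type) (Val : V → Type) : Type := (v : V) → Val v

/-- A recursive system of functions over the signature `(V, Val)`:
each endogenous variable `v ∈ En` has a parent set `pa v` and a function `fn v`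
computing its value from the values of its parents; recursiveness says that the
induced causal graph is acyclic. -/
structure Sys (V : Type) (Val : V → Type) : Type where
  En : Finset V
  pa : V → Finset V
  fn : (v : V) → ((w : V) → w ∈ pa v → Val w) → Val v
  recursive : ∀ x : V, ¬ Relation.TransGen (fun a b => b ∈ En ∧ a ∈ pa b) x x

variable {V : Type} [Fintype V] [DecidableEq V] [Nonempty V]
  {Val : V → Type} [∀ v, Fintype (Val v)] [∀ v, DecidableEq (Val v)] [∀ v, Nonempty (Val v)]

namespace CausalTeam

/-- The edge relation of the causal graph of a system of functions. -/
@[reducible] def Edge (F : Sys V Val) (a b : V) : Prop := b ∈ F.En ∧ a ∈ F.pa b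

theorem wfEdge (F : Sys V Val) : WellFounded (Edge F) := by
  have h2 : WellFounded (Relation.TransGen (Edge F)) := by
    have hirr : IsIrrefl V (Relation.TransGen (Edge F)) := ⟨F.recursive⟩
    have htr : IsTrans V (Relation.TransGen (Edge F)) :=
      ⟨fun _ _ _ h h' => Relation.TransGen.trans h h'⟩
    exact Finite.wellFounded_of_trans_of_irrefl _
  exact Subrelation.wf (fun h => Relation.TransGen.single h) h2

/-- An assignment is compatible with a system of functions if every endogenous
variable takes the value prescribed by its function. -/
def Compat (F : Sys V Val) (s : Asg V Val) : Prop :=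
  ∀ v ∈ F.En, s v = F.fn v (fun w _ => s w)

/-- The variables occurring in a conjunction of equations `𝐗 = 𝐱`. -/
def ikeys (I : List ((v : V) × Val v)) : List V := I.map Sigma.fst

/-- A conjunction of equations is consistent if it contains no pair `X = x`, `X = x'`
with distinct values `x ≠ x'`. -/
def IConsistent (I : List ((v : V) × Val v)) : Prop :=
  ∀ p ∈ I, ∀ q ∈ I, p.1 = q.1 → p = q

/-- Look up the (first) value assigned to a variable by a conjunction of equations. -/
def ilookup : List ((v : V) × Val v) → (v : V) → Option (Val v)
  | [], _ => none
  | p :: I, v => if h : p.1 = v then some (h ▸ p.2) else ilookup I v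

/-- The intervened system of functions `F_{𝐗=𝐱}`: the restriction of `F` to `En(F) ∖ 𝐗`. -/
def doSys (F : Sys V Val) (I : List ((v : V) × Val v)) : Sys V Val where
  En := F.En.filter (fun v => v ∉ ikeys I)
  pa := F.pa
  fn := F.fn
  recursive := by
    intro x hx
    refine F.recursive x (Relation.TransGen.mono ?_ x x hx)
    intro a b hab
    exact ⟨(Finset.mem_filter.mp hab.1).1, hab.2⟩

/-- The intervened assignment `s_{𝐗=𝐱}`: variables in `𝐗` get the prescribed values,
exogenous variables outside `𝐗` keep their values, and endogenous variables outside `𝐗`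
are recomputed (recursively) by their functions. -/
def doAsg (F : Sys V Val) (I : List ((v : V) × Val v)) (s : Asg V Val) : Asg V Val :=
  (wfEdge F).fix (C := fun v => Val v) fun v ih =>
    match ilookup I v with
    | some x => x
    | none => if h : v ∈ F.En then F.fn v (fun w hw => ih w ⟨h, hw⟩) else s v

/-- Formulas of the languages CO[σ], CO⩗[σ] and COD[σ]:
equations `X = x`, dependence atoms `=(𝐗;Y)`, negation, conjunction,
tensor disjunction `∨`, intuitionistic disjunction `⩗`, and counterfactuals `𝐗=𝐱 □→ φ`. -/
inductive Fml (V : Type) (Val : V → Type) : Type where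
  | eq : (v : V) → Val v → Fml V Val
  | dep : List V → V → Fml V Val
  | neg : Fml V Val → Fml V Val
  | and : Fml V Val → Fml V Val → Fml V Val
  | or : Fml V Val → Fml V Val → Fml V Val
  | ior : Fml V Val → Fml V Val → Fml V Val
  | cf : List ((v : V) × Val v) → Fml V Val → Fml V Val

/-- CO[σ]-formulas: equations, closed under ¬, ∧, ∨ and counterfactuals. -/
inductive IsCO : Fml V Val → Prop where
  | eq (v : V) (x : Val v) : IsCO (Fml.eq v x)
  | neg {φ} : IsCO φ → IsCO (Fml.neg φ)
  | and {φ ψ} : IsCO φ → IsCO ψ → IsCO (Fml.and φ ψ)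
  | or {φ ψ} : IsCO φ → IsCO ψ → IsCO (Fml.or φ ψ)
  | cf {φ} (I : List ((v : V) × Val v)) : IsCO φ → IsCO (Fml.cf I φ)

/-- CO⩗[σ]-formulas: additionally closed under ⩗; negation applies to CO-formulas only. -/
inductive IsCOV : Fml V Val → Prop where
  | eq (v : V) (x : Val v) : IsCOV (Fml.eq v x)
  | neg {φ} : IsCO φ → IsCOV (Fml.neg φ)
  | and {φ ψ} : IsCOV φ → IsCOV ψ → IsCOV (Fml.and φ ψ)
  | or {φ ψ} : IsCOV φ → IsCOV ψ → IsCOV (Fml.or φ ψ)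
  | ior {φ ψ} : IsCOV φ → IsCOV ψ → IsCOV (Fml.ior φ ψ)
  | cf {φ} (I : List ((v : V) × Val v)) : IsCOV φ → IsCOV (Fml.cf I φ)

/-- COD[σ]-formulas: additionally allow dependence atoms; negation applies to
CO-formulas only. -/
inductive IsCOD : Fml V Val → Prop where
  | eq (v : V) (x : Val v) : IsCOD (Fml.eq v x)
  | dep (X : List V) (Y : V) : IsCOD (Fml.dep X Y)
  | neg {φ} : IsCO φ → IsCOD (Fml.neg φ)
  | and {φ ψ} : IsCOD φ → IsCOD ψ → IsCOD (Fml.and φ ψ)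
  | or {φ ψ} : IsCOD φ → IsCOD ψ → IsCOD (Fml.or φ ψ)
  | cf {φ} (I : List ((v : V) × Val v)) : IsCOD φ → IsCOD (Fml.cf I φ)

/-- Satisfaction over causal teams `(Tm, F)` (the causal team semantics `⊨^c`). -/
def satC : Set (Asg V Val) → Sys V Val → Fml V Val → Prop
  | Tm, _, Fml.eq v x => ∀ s ∈ Tm, s v = x
  | Tm, _, Fml.dep X Y => ∀ s ∈ Tm, ∀ t ∈ Tm, (∀ w ∈ X, s w = t w) → s Y = t Y
  | Tm, F, Fml.neg φ => ∀ s ∈ Tm, ¬ satC {s} F φ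
  | Tm, F, Fml.and φ ψ => satC Tm F φ ∧ satC Tm F ψ
  | Tm, F, Fml.or φ ψ => ∃ T1 T2 : Set (Asg V Val), T1 ∪ T2 = Tm ∧ satC T1 F φ ∧ satC T2 F ψ
  | Tm, F, Fml.ior φ ψ => satC Tm F φ ∨ satC Tm F ψ
  | Tm, F, Fml.cf I φ => IConsistent I → satC (doAsg F I '' Tm) (doSys F I) φ

/-- Satisfaction over generalized causal teams (the semantics `⊨^g`). -/
def satG : Set (Asg V Val × Sys V Val) → Fml V Val → Prop
  | T, Fml.eq v x => ∀ p ∈ T, p.1 v = x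
  | T, Fml.dep X Y => ∀ p ∈ T, ∀ q ∈ T, (∀ w ∈ X, p.1 w = q.1 w) → p.1 Y = q.1 Y
  | T, Fml.neg φ => ∀ p ∈ T, ¬ satG {p} φ
  | T, Fml.and φ ψ => satG T φ ∧ satG T ψ
  | T, Fml.or φ ψ => ∃ T1 T2 : Set (Asg V Val × Sys V Val), T1 ∪ T2 = T ∧ satG T1 φ ∧ satG T2 ψ
  | T, Fml.ior φ ψ => satG T φ ∨ satG T ψ
  | T, Fml.cf I φ => IConsistent I →
      satG ((fun p : Asg V Val × Sys V Val => (doAsg p.2 I p.1, doSys p.2 I)) '' T) φ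

/-- A generalized causal team: a set of pairs `(s, F)` with `s` compatible with `F`. -/
def GTOk (T : Set (Asg V Val × Sys V Val)) : Prop := ∀ p ∈ T, Compat p.2 p.1

/-- The falsum `⊥`, an abbreviation for `X=x ∧ ¬(X=x)`. -/
def fBot : Fml V Val :=
  Fml.and (Fml.eq (Classical.arbitrary V) (Classical.arbitrary (Val (Classical.arbitrary V))))
    (Fml.neg (Fml.eq (Classical.arbitrary V) (Classical.arbitrary (Val (Classical.arbitrary V)))))

/-- A canonical tautology. -/
def fTop : Fml V Val := Fml.neg fBot

/-- Finite conjunction of a list of formulas. -/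
def bigAnd : List (Fml V Val) → Fml V Val
  | [] => fTop
  | [φ] => φ
  | φ :: ψ :: rest => Fml.and φ (bigAnd (ψ :: rest))

/-- Finite tensor disjunction of a list of formulas. -/
def bigOr : List (Fml V Val) → Fml V Val
  | [] => fBot
  | [φ] => φ
  | φ :: ψ :: rest => Fml.or φ (bigOr (ψ :: rest))

/-- Finite intuitionistic disjunction of a list of formulas. -/
def bigIor : List (Fml V Val) → Fml V Val
  | [] => fBot
  | [φ] => φ
  | φ :: ψ :: rest => Fml.ior φ (bigIor (ψ :: rest))

/-- The conjunction of equations describing the restriction of the assignment `t`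
to the set `S` of variables. -/
def eqList (S : Finset V) (t : Asg V Val) : List ((v : V) × Val v) :=
  S.toList.map (fun w => ⟨w, t w⟩)

/-- The list of all assignments over the signature. -/
def allAsg : List (Asg V Val) := (Finset.univ : Finset (Asg V Val)).toList

/-- `η(v)`: for every tuple of values for the variables other than `v`, intervening
with those values forces `v` to take the value computed by `F.fn v` from the parents. -/
def eta (F : Sys V Val) (v : V) : Fml V Val :=
  bigAnd (allAsg.map (fun t =>
    Fml.cf (eqList (Finset.univ.erase v) t) (Fml.eq v (F.fn v (fun w _ => t w)))))

/-- `ξ(v)`: the value of `v` is unaffected by interventions on all other variables. -/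
def xi (v : V) : Fml V Val :=
  bigAnd ((Finset.univ : Finset (Val v)).toList.map (fun x =>
    bigAnd (allAsg.map (fun t =>
      Fml.or (Fml.neg (Fml.eq v x))
        (Fml.cf (eqList (Finset.univ.erase v) t) (Fml.eq v x))))))

/-- `Cn(F)`: the endogenous variables of `F` governed by a constant function. -/
def Cn (F : Sys V Val) : Finset V :=
  F.En.filter (fun v => ∃ c : Val v, ∀ p, F.fn v p = c)

/-- The non-constant endogenous variables `En(F) ∖ Cn(F)`. -/
def strictEn (F : Sys V Val) : Finset V := F.En \ Cn F

/-- `F_v ∼ G_v`: equivalence of the two functions for `v` up to dummy arguments. -/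
def SimFn (F G : Sys V Val) (v : V) : Prop :=
  ∀ (x : (w : V) → w ∈ F.pa v ∩ G.pa v → Val w)
    (y : (w : V) → w ∈ F.pa v \ G.pa v → Val w)
    (z : (w : V) → w ∈ G.pa v \ F.pa v → Val w),
    F.fn v (fun w hw =>
      if h : w ∈ G.pa v then x w (Finset.mem_inter.mpr ⟨hw, h⟩)
      else y w (Finset.mem_sdiff.mpr ⟨hw, h⟩)) =
    G.fn v (fun w hw =>
      if h : w ∈ F.pa v then x w (Finset.mem_inter.mpr ⟨h, hw⟩)
      else z w (Finset.mem_sdiff.mpr ⟨hw, h⟩))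

/-- `F ∼ G`: equivalence of systems of functions up to dummy arguments. -/
def Sim (F G : Sys V Val) : Prop :=
  strictEn F = strictEn G ∧ ∀ v ∈ strictEn F, SimFn F G v

/-- The CO[σ]-formula `Φ^F` characterizing the function component `F` up to `∼`. -/
def Phi (F : Sys V Val) : Fml V Val :=
  Fml.and (bigAnd (F.En.toList.map (fun v => eta F v)))
    (bigAnd ((((Finset.univ : Finset V) \ F.En) ∪ Cn F).toList.map (fun v => xi v)))

/-- The CO[σ]-formula `Θ^A`: the team component is included in `A`. -/
def Theta (A : Finset (Asg V Val)) : Fml V Val :=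
  bigOr (A.toList.map (fun s =>
    bigAnd ((Finset.univ : Finset V).toList.map (fun v => Fml.eq v (s v)))))

/-- `χ₁`: all variables are constant in the team. -/
def chi1 : Fml V Val :=
  bigAnd ((Finset.univ : Finset V).toList.map (fun v => Fml.dep [] v))

/-- `χ_k`: the team has at most `k` elements. -/
def chi : ℕ → Fml V Val
  | 0 => fBot
  | 1 => chi1
  | (k+2) => Fml.or chi1 (chi (k+1))

end CausalTeam

open CausalTeam

/-- Downward closure of causal-team satisfaction. -/
theorem satC_mono {V : Type} [Fintype V] [DecidableEq V] [Nonempty V]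
    {Val : V → Type} [∀ v, Fintype (Val v)] [∀ v, DecidableEq (Val v)] [∀ v, Nonempty (Val v)]
    (φ : Fml V Val) : ∀ (F : Sys V Val) (T T' : Set (Asg V Val)),
    T' ⊆ T → satC T F φ → satC T' F φ := by
  induction φ with
  | eq v x => intro F T T' h hs s hsT'; exact hs s (h hsT')
  | dep X Y => intro F T T' h hs s hs' t ht' hw; exact hs s (h hs') t (h ht') hw
  | neg φ ih => intro F T T' h hs s hsT'; exact hs s (h hsT')
  | and φ ψ ihφ ihψ => intro F T T' h hs; exact ⟨ihφ F T T' h hs.1, ihψ F T T' h hs.2⟩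
  | or φ ψ ihφ ihψ =>
    intro F T T' h hs
    obtain ⟨T1, T2, hu, h1, h2⟩ := hs
    refine ⟨T1 ∩ T', T2 ∩ T', ?_, ihφ F T1 _ Set.inter_subset_left h1,
      ihψ F T2 _ Set.inter_subset_left h2⟩
    rw [← Set.union_inter_distrib_right, hu]
    exact Set.inter_eq_right.mpr h
  | ior φ ψ ihφ ihψ =>
    intro F T T' h hs
    cases hs with
    | inl h1 => exact Or.inl (ihφ F T T' h h1)
    | inr h2 => exact Or.inr (ihψ F T T' h h2)
  | cf I φ ih =>
    intro F T T' h hs hc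
    exact ih (doSys F I) _ _ (Set.image_mono h) (hs hc)

/-- The key induction: over a generalized causal team with constant function
component `F`, satisfaction coincides with causal-team satisfaction. -/
theorem satG_iff_satC {V : Type} [Fintype V] [DecidableEq V] [Nonempty V]
    {Val : V → Type} [∀ v, Fintype (Val v)] [∀ v, DecidableEq (Val v)] [∀ v, Nonempty (Val v)]
    (φ : Fml V Val) : ∀ (F : Sys V Val) (T : Set (Asg V Val × Sys V Val)),
    (∀ p ∈ T, p.2 = F) → (satG T φ ↔ satC (Prod.fst '' T) F φ) := by
  induction φ with
  | eq v x =>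
    intro F T hconst
    constructor
    · rintro h s ⟨p, hp, rfl⟩; exact h p hp
    · intro h p hp; exact h p.1 ⟨p, hp, rfl⟩
  | dep X Y =>
    intro F T hconst
    constructor
    · rintro h s ⟨p, hp, rfl⟩ t ⟨q, hq, rfl⟩ hw; exact h p hp q hq hw
    · intro h p hp q hq hw; exact h p.1 ⟨p, hp, rfl⟩ q.1 ⟨q, hq, rfl⟩ hw
  | neg φ ih =>
    intro F T hconst
    constructor
    · rintro h s ⟨p, hp, rfl⟩ hsc
      refine h p hp ?_
      rw [ih F {p} (by intro q hq; rw [Set.mem_singleton_iff] at hq; rw [hq]; exact hconst p hp)]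
      simpa [Set.image_singleton] using hsc
    · intro h p hp hg
      refine h p.1 ⟨p, hp, rfl⟩ ?_
      rw [ih F {p} (by intro q hq; rw [Set.mem_singleton_iff] at hq; rw [hq]; exact hconst p hp)] at hg
      simpa [Set.image_singleton] using hg
  | and φ ψ ihφ ihψ =>
    intro F T hconst
    exact and_congr (ihφ F T hconst) (ihψ F T hconst)
  | or φ ψ ihφ ihψ =>
    intro F T hconst
    constructor
    · rintro ⟨T1, T2, hu, h1, h2⟩
      have hT1 : T1 ⊆ T := hu ▸ Set.subset_union_left
      have hT2 : T2 ⊆ T := hu ▸ Set.subset_union_right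
      refine ⟨Prod.fst '' T1, Prod.fst '' T2, ?_, ?_, ?_⟩
      · rw [← Set.image_union, hu]
      · exact (ihφ F T1 (fun p hp => hconst p (hT1 hp))).mp h1
      · exact (ihψ F T2 (fun p hp => hconst p (hT2 hp))).mp h2
    · rintro ⟨S1, S2, hu, h1, h2⟩
      refine ⟨{p ∈ T | p.1 ∈ S1}, {p ∈ T | p.1 ∈ S2}, ?_, ?_, ?_⟩
      · ext p
        constructor
        · rintro (⟨hp, _⟩ | ⟨hp, _⟩) <;> exact hp
        · intro hp
          have : p.1 ∈ S1 ∪ S2 := hu ▸ ⟨p, hp, rfl⟩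
          cases this with
          | inl h => exact Or.inl ⟨hp, h⟩
          | inr h => exact Or.inr ⟨hp, h⟩
      · rw [ihφ F _ (fun p hp => hconst p hp.1)]
        exact satC_mono φ F S1 _ (by rintro s ⟨p, ⟨_, hs⟩, rfl⟩; exact hs) h1
      · rw [ihψ F _ (fun p hp => hconst p hp.1)]
        exact satC_mono ψ F S2 _ (by rintro s ⟨p, ⟨_, hs⟩, rfl⟩; exact hs) h2
  | ior φ ψ ihφ ihψ =>
    intro F T hconst
    exact or_congr (ihφ F T hconst) (ihψ F T hconst)
  | cf I φ ih =>
    intro F T hconst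
    have himg : ((fun p : Asg V Val × Sys V Val => (doAsg p.2 I p.1, doSys p.2 I)) '' T)
        = ((fun s : Asg V Val => (doAsg F I s, doSys F I)) '' (Prod.fst '' T)) := by
      rw [Set.image_image]
      apply Set.image_congr
      intro p hp
      rw [hconst p hp]
    constructor
    · intro h hc
      have hG := h hc
      rw [himg] at hG
      have := (ih (doSys F I) _ (by rintro q ⟨s, hs, rfl⟩; rfl)).mp hG
      rwa [Set.image_image] at this
    · intro h hc
      have hC := h hc
      show satG ((fun p : Asg V Val × Sys V Val => (doAsg p.2 I p.1, doSys p.2 I)) '' T) φ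
      rw [himg, ih (doSys F I) _ (by rintro q ⟨s, hs, rfl⟩; rfl), Set.image_image]
      exact hC

/-- A nonempty recursive generalized causal team all of whose members have the same
function component `F` satisfies a CO⩗[σ]- or COD[σ]-formula iff the associated
causal team `T^c = (T⁻, F)` does. -/
theorem generalized_constant_iff_causal {V : Type} [Fintype V] [DecidableEq V] [Nonempty V]
    {Val : V → Type} [∀ v, Fintype (Val v)] [∀ v, DecidableEq (Val v)] [∀ v, Nonempty (Val v)]
    (φ : Fml V Val) (hφ : IsCOV φ ∨ IsCOD φ)
    (T : Set (Asg V Val × Sys V Val)) (hok : GTOk T) (hne : T.Nonempty)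
    (F : Sys V Val) (hconst : ∀ p ∈ T, p.2 = F) :
    satG T φ ↔ satC (Prod.fst '' T) F φ := by
  exact satG_iff_satC φ F T hconst
end
end

section
/- For any set Δ ∪ {α} of CO[σ]-formulas: Δ ⊨^g α if and only if Δ ⊨^c α, where Δ ⊨^c α (resp. Δ ⊨^g α) means that every recursive causal team (resp. recursive generalized causal team) over σ satisfying all members of Δ also satisfies α. -/
open scoped Classical
set_option linter.unusedSectionVars false

noncomputable section

variable {V : Type} [Fintype V] [DecidableEq V] [Nonempty V]
  {Val : V → Type} [∀ v, Fintype (Val v)] [∀ v, DecidableEq (Val v)] [∀ v, Nonempty (Val v)]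

open CausalTeam

/-- Flatness of CO-formulas for the causal team semantics. -/
lemma flatC {φ : Fml V Val} (h : IsCO φ) :
    ∀ (Tm : Set (Asg V Val)) (F : Sys V Val),
      satC Tm F φ ↔ ∀ s ∈ Tm, satC {s} F φ := by
  induction h with
  | eq v x => intro Tm F; simp [satC]
  | neg h => intro Tm F; simp [satC]
  | and h1 h2 ih1 ih2 =>
      intro Tm F
      simp only [satC]
      rw [ih1, ih2]
      constructor
      · rintro ⟨a, b⟩ s hs; exact ⟨a s hs, b s hs⟩
      · intro h; exact ⟨fun s hs => (h s hs).1, fun s hs => (h s hs).2⟩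
  | @or φ ψ h1 h2 ih1 ih2 =>
      intro Tm F
      simp only [satC]
      constructor
      · rintro ⟨T1, T2, hu, hφ, hψ⟩ s hs
        have hs' : s ∈ T1 ∪ T2 := hu ▸ hs
        rcases hs' with hm | hm
        · exact ⟨{s}, ∅, by simp, (ih1 T1 F).mp hφ s hm, (ih2 ∅ F).mpr (by simp)⟩
        · exact ⟨∅, {s}, by simp, (ih1 ∅ F).mpr (by simp), (ih2 T2 F).mp hψ s hm⟩
      · intro h
        refine ⟨{s ∈ Tm | satC {s} F φ}, {s ∈ Tm | ¬ satC {s} F φ}, ?_, ?_, ?_⟩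
        · ext s; by_cases hc : satC {s} F φ <;> simp [hc]
        · exact (ih1 _ F).mpr (fun s hs => hs.2)
        · refine (ih2 _ F).mpr (fun s hs => ?_)
          obtain ⟨A, B, hu, hA, hB⟩ := h s hs.1
          have hsm : s ∈ A ∪ B := hu ▸ rfl
          rcases hsm with hm | hm
          · exact absurd ((ih1 A F).mp hA s hm) hs.2
          · exact (ih2 B F).mp hB s hm
  | @cf φ I h ih =>
      intro Tm F
      simp only [satC]
      constructor
      · intro hc s hs hI
        have := (ih _ _).mp (hc hI) (doAsg F I s) ⟨s, hs, rfl⟩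
        rwa [Set.image_singleton]
      · intro h hI
        refine (ih _ _).mpr ?_
        rintro t ⟨s, hs, rfl⟩
        have := h s hs hI
        rwa [Set.image_singleton] at this

/-- Flatness of CO-formulas for the generalized causal team semantics. -/
lemma flatG {φ : Fml V Val} (h : IsCO φ) :
    ∀ (T : Set (Asg V Val × Sys V Val)),
      satG T φ ↔ ∀ p ∈ T, satG {p} φ := by
  induction h with
  | eq v x => intro T; simp [satG]
  | neg h => intro T; simp [satG]
  | and h1 h2 ih1 ih2 =>
      intro T
      simp only [satG]
      rw [ih1, ih2]
      constructor
      · rintro ⟨a, b⟩ p hp; exact ⟨a p hp, b p hp⟩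
      · intro h; exact ⟨fun p hp => (h p hp).1, fun p hp => (h p hp).2⟩
  | @or φ ψ h1 h2 ih1 ih2 =>
      intro T
      simp only [satG]
      constructor
      · rintro ⟨T1, T2, hu, hφ, hψ⟩ p hp
        have hp' : p ∈ T1 ∪ T2 := hu ▸ hp
        rcases hp' with hm | hm
        · exact ⟨{p}, ∅, by simp, (ih1 T1).mp hφ p hm, (ih2 ∅).mpr (by simp)⟩
        · exact ⟨∅, {p}, by simp, (ih1 ∅).mpr (by simp), (ih2 T2).mp hψ p hm⟩
      · intro h
        refine ⟨{p ∈ T | satG {p} φ}, {p ∈ T | ¬ satG {p} φ}, ?_, ?_, ?_⟩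
        · ext p; by_cases hc : satG {p} φ <;> simp [hc]
        · exact (ih1 _).mpr (fun p hp => hp.2)
        · refine (ih2 _).mpr (fun p hp => ?_)
          obtain ⟨A, B, hu, hA, hB⟩ := h p hp.1
          have hpm : p ∈ A ∪ B := hu ▸ rfl
          rcases hpm with hm | hm
          · exact absurd ((ih1 A).mp hA p hm) hp.2
          · exact (ih2 B).mp hB p hm
  | @cf φ I h ih =>
      intro T
      simp only [satG]
      constructor
      · intro hc p hp hI
        have := (ih _).mp (hc hI) _ ⟨p, hp, rfl⟩
        rwa [Set.image_singleton]
      · intro h hI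
        refine (ih _).mpr ?_
        rintro t ⟨p, hp, rfl⟩
        have := h p hp hI
        rwa [Set.image_singleton] at this

/-- On singletons, the two semantics agree for CO-formulas. -/
lemma singG_iff_singC {φ : Fml V Val} (h : IsCO φ) :
    ∀ (s : Asg V Val) (F : Sys V Val), satG {(s, F)} φ ↔ satC {s} F φ := by
  induction h with
  | eq v x => intro s F; simp [satG, satC]
  | @neg φ h ih =>
      intro s F
      simp only [satG, satC, Set.mem_singleton_iff, forall_eq]
      exact not_congr (ih s F)
  | @and φ ψ h1 h2 ih1 ih2 =>
      intro s F
      simp only [satG, satC]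
      rw [ih1, ih2]
  | @or φ ψ h1 h2 ih1 ih2 =>
      intro s F
      simp only [satG, satC]
      constructor
      · rintro ⟨T1, T2, hu, hφ, hψ⟩
        have hm : (s, F) ∈ T1 ∪ T2 := hu ▸ rfl
        rcases hm with hm | hm
        · exact ⟨{s}, ∅, by simp, (ih1 s F).mp ((flatG h1 T1).mp hφ _ hm),
            (flatC h2 ∅ F).mpr (by simp)⟩
        · exact ⟨∅, {s}, by simp, (flatC h1 ∅ F).mpr (by simp),
            (ih2 s F).mp ((flatG h2 T2).mp hψ _ hm)⟩
      · rintro ⟨T1, T2, hu, hφ, hψ⟩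
        have hm : s ∈ T1 ∪ T2 := hu ▸ rfl
        rcases hm with hm | hm
        · exact ⟨{(s, F)}, ∅, by simp, (ih1 s F).mpr ((flatC h1 T1 F).mp hφ _ hm),
            (flatG h2 ∅).mpr (by simp)⟩
        · exact ⟨∅, {(s, F)}, by simp, (flatG h1 ∅).mpr (by simp),
            (ih2 s F).mpr ((flatC h2 T2 F).mp hψ _ hm)⟩
  | @cf φ I h ih =>
      intro s F
      simp only [satG, satC, Set.image_singleton]
      exact imp_congr Iff.rfl (ih _ _)

/-- For a set `Δ ∪ {α}` of CO[σ]-formulas, logical consequence over recursive generalized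
causal teams coincides with logical consequence over recursive causal teams. -/
theorem CO_gen_consequence_iff_causal_consequence
    {V : Type} [Fintype V] [DecidableEq V] [Nonempty V]
    {Val : V → Type} [∀ v, Fintype (Val v)] [∀ v, DecidableEq (Val v)] [∀ v, Nonempty (Val v)]
    (Δ : Set (Fml V Val)) (α : Fml V Val) (hΔ : ∀ δ ∈ Δ, IsCO δ) (hα : IsCO α) :
    (∀ T : Set (Asg V Val × Sys V Val), GTOk T →
        (∀ δ ∈ Δ, satG T δ) → satG T α) ↔
    (∀ (Tm : Set (Asg V Val)) (F : Sys V Val), (∀ s ∈ Tm, Compat F s) →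
        (∀ δ ∈ Δ, satC Tm F δ) → satC Tm F α) := by
  constructor
  · intro hg Tm F hcomp hδ
    set T : Set (Asg V Val × Sys V Val) := (fun s => (s, F)) '' Tm with hT
    have hok : GTOk T := by rintro p ⟨s, hs, rfl⟩; exact hcomp s hs
    have hsat : ∀ δ ∈ Δ, satG T δ := by
      intro δ hδm
      refine (flatG (hΔ δ hδm) T).mpr ?_
      rintro p ⟨s, hs, rfl⟩
      exact (singG_iff_singC (hΔ δ hδm) s F).mpr ((flatC (hΔ δ hδm) Tm F).mp (hδ δ hδm) s hs)
    have := hg T hok hsat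
    refine (flatC hα Tm F).mpr (fun s hs => ?_)
    exact (singG_iff_singC hα s F).mp ((flatG hα T).mp this (s, F) ⟨s, hs, rfl⟩)
  · intro hc T hok hδ
    refine (flatG hα T).mpr (fun p hp => ?_)
    obtain ⟨s, F⟩ := p
    have h1 : ∀ δ ∈ Δ, satC {s} F δ := by
      intro δ hδm
      exact (singG_iff_singC (hΔ δ hδm) s F).mp ((flatG (hΔ δ hδm) T).mp (hδ δ hδm) _ hp)
    have h2 : satC {s} F α := by
      refine hc {s} F ?_ h1
      intro t ht
      rw [Set.eq_of_mem_singleton ht]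
      exact hok (s, F) hp
    exact (singG_iff_singC hα s F).mpr h2
end
end

section
/- Characterization of uniformity: For any recursive generalized causal team T over σ: T ⊨^g ⩗_{F ∈ 𝔽σ} Φ^F if and only if T is uniform, where 𝔽σ is the (finite) set of all systems of functions over σ and the disjunction is the intuitionistic disjunction ⩗. -/
open scoped Classical
set_option linter.unusedSectionVars false

noncomputable section

variable {V : Type} [Fintype V] [DecidableEq V] [Nonempty V]
  {Val : V → Type} [∀ v, Fintype (Val v)] [∀ v, DecidableEq (Val v)] [∀ v, Nonempty (Val v)]

open CausalTeam

namespace CausalTeam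

section Helpers

variable {V : Type} [Fintype V] [DecidableEq V] [Nonempty V]
  {Val : V → Type} [∀ v, Fintype (Val v)] [∀ v, DecidableEq (Val v)] [∀ v, Nonempty (Val v)]

/- Basic unfolding lemmas for `satG`. -/
theorem satG_eq {T : Set (Asg V Val × Sys V Val)} {v : V} {x : Val v} :
    satG T (Fml.eq v x) ↔ ∀ p ∈ T, p.1 v = x := Iff.rfl

theorem satG_neg {T : Set (Asg V Val × Sys V Val)} {φ : Fml V Val} :
    satG T (Fml.neg φ) ↔ ∀ p ∈ T, ¬ satG {p} φ := Iff.rfl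

theorem satG_and {T : Set (Asg V Val × Sys V Val)} {φ ψ : Fml V Val} :
    satG T (Fml.and φ ψ) ↔ satG T φ ∧ satG T ψ := Iff.rfl

theorem satG_or {T : Set (Asg V Val × Sys V Val)} {φ ψ : Fml V Val} :
    satG T (Fml.or φ ψ) ↔
      ∃ T1 T2 : Set (Asg V Val × Sys V Val), T1 ∪ T2 = T ∧ satG T1 φ ∧ satG T2 ψ := Iff.rfl

theorem satG_ior {T : Set (Asg V Val × Sys V Val)} {φ ψ : Fml V Val} :
    satG T (Fml.ior φ ψ) ↔ satG T φ ∨ satG T ψ := Iff.rfl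

theorem satG_cf {T : Set (Asg V Val × Sys V Val)} {I : List ((v : V) × Val v)} {φ : Fml V Val} :
    satG T (Fml.cf I φ) ↔ (IConsistent I →
      satG ((fun p : Asg V Val × Sys V Val => (doAsg p.2 I p.1, doSys p.2 I)) '' T) φ) := Iff.rfl

theorem not_satG_single_fBot (p : Asg V Val × Sys V Val) : ¬ satG {p} (fBot : Fml V Val) := by
  rintro ⟨h1, h2⟩
  exact h2 p rfl (fun q hq => by cases hq; exact h1 p rfl)

theorem satG_fTop (T : Set (Asg V Val × Sys V Val)) : satG T (fTop : Fml V Val) :=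
  fun p _ => not_satG_single_fBot p

theorem satG_bigAnd (T : Set (Asg V Val × Sys V Val)) (l : List (Fml V Val)) :
    satG T (bigAnd l) ↔ ∀ φ ∈ l, satG T φ := by
  induction l with
  | nil => simpa [bigAnd] using satG_fTop T
  | cons φ l ih =>
    cases l with
    | nil => simp [bigAnd]
    | cons ψ r =>
      rw [show bigAnd (φ :: ψ :: r) = Fml.and φ (bigAnd (ψ :: r)) from rfl, satG_and, ih]
      constructor
      · rintro ⟨h1, h2⟩ χ hχ
        rcases List.mem_cons.mp hχ with rfl | hχ
        · exact h1
        · exact h2 χ hχ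
      · intro h
        exact ⟨h φ (by simp), fun χ hχ => h χ (by simp [hχ])⟩

theorem satG_bigIor (T : Set (Asg V Val × Sys V Val)) (l : List (Fml V Val)) (hl : l ≠ []) :
    satG T (bigIor l) ↔ ∃ φ ∈ l, satG T φ := by
  induction l with
  | nil => exact absurd rfl hl
  | cons φ l ih =>
    cases l with
    | nil => simp [bigIor]
    | cons ψ r =>
      rw [show bigIor (φ :: ψ :: r) = Fml.ior φ (bigIor (ψ :: r)) from rfl, satG_ior,
        ih (by simp)]
      constructor
      · rintro (h | ⟨χ, hχ, h⟩)
        · exact ⟨φ, by simp, h⟩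
        · exact ⟨χ, by simp [hχ], h⟩
      · rintro ⟨χ, hχ, h⟩
        rcases List.mem_cons.mp hχ with rfl | hχ
        · exact Or.inl h
        · exact Or.inr ⟨χ, hχ, h⟩

/- Interventions. -/

theorem doAsg_unfold (F : Sys V Val) (I : List ((v : V) × Val v)) (s : Asg V Val) (v : V) :
    doAsg F I s v = match ilookup I v with
      | some x => x
      | none => if h : v ∈ F.En then F.fn v (fun w _ => doAsg F I s w) else s v := by
  unfold doAsg
  rw [WellFounded.fix_eq]

theorem doAsg_lookup {F : Sys V Val} {I : List ((v : V) × Val v)} {s : Asg V Val} {v : V}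
    {x : Val v} (h : ilookup I v = some x) : doAsg F I s v = x := by
  rw [doAsg_unfold, h]

theorem doAsg_none {F : Sys V Val} {I : List ((v : V) × Val v)} {s : Asg V Val} {v : V}
    (h : ilookup I v = none) :
    doAsg F I s v = if h : v ∈ F.En then F.fn v (fun w _ => doAsg F I s w) else s v := by
  rw [doAsg_unfold, h]

theorem ilookup_map (l : List V) (t : Asg V Val) (v : V) :
    ilookup (l.map fun w => (⟨w, t w⟩ : (v : V) × Val v)) v
      = if v ∈ l then some (t v) else none := by
  induction l with
  | nil => simp [ilookup]
  | cons a l ih =>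
    simp only [List.map_cons, ilookup]
    by_cases h : a = v
    · subst h; simp
    · rw [dif_neg h, ih]
      simp [List.mem_cons, Ne.symm h]

theorem ilookup_eqList (S : Finset V) (t : Asg V Val) (v : V) :
    ilookup (eqList S t) v = if v ∈ S then some (t v) else none := by
  unfold eqList; rw [ilookup_map]; simp [Finset.mem_toList]

theorem iconsistent_eqList (S : Finset V) (t : Asg V Val) : IConsistent (eqList S t) := by
  intro p hp q hq hpq
  simp only [eqList, List.mem_map] at hp hq
  obtain ⟨a, -, rfl⟩ := hp
  obtain ⟨b, -, rfl⟩ := hq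
  dsimp at hpq
  subst hpq
  rfl

/-- The value of `v` after the intervention setting all other variables according to `t`. -/
def ival (G : Sys V Val) (s t : Asg V Val) (v : V) : Val v :=
  if _ : v ∈ G.En then G.fn v (fun w _ => t w) else s v

theorem doAsg_erase_ne (G : Sys V Val) (s t : Asg V Val) (v w : V) (hw : w ≠ v) :
    doAsg G (eqList (Finset.univ.erase v) t) s w = t w :=
  doAsg_lookup (by rw [ilookup_eqList]; simp [Finset.mem_erase, hw])

theorem doAsg_erase_self (G : Sys V Val) (s t : Asg V Val) (v : V) :
    doAsg G (eqList (Finset.univ.erase v) t) s v = ival G s t v := by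
  rw [doAsg_none (by rw [ilookup_eqList]; simp)]
  unfold ival
  by_cases h : v ∈ G.En
  · rw [dif_pos h, dif_pos h]
    congr 1
    funext w hw
    exact doAsg_erase_ne G s t v w
      (fun e => G.recursive v (Relation.TransGen.single ⟨h, e ▸ hw⟩))
  · rw [dif_neg h, dif_neg h]

end Helpers

end CausalTeam
namespace CausalTeam

section Helpers2

variable {V : Type} [Fintype V] [DecidableEq V] [Nonempty V]
  {Val : V → Type} [∀ v, Fintype (Val v)] [∀ v, DecidableEq (Val v)] [∀ v, Nonempty (Val v)]

/-- The first conjunct condition of `Φ^F`, corresponding to `η(v)`. -/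
def CondA (T : Set (Asg V Val × Sys V Val)) (F : Sys V Val) (v : V) : Prop :=
  ∀ p ∈ T, ∀ t : Asg V Val, ival p.2 p.1 t v = F.fn v (fun w _ => t w)

/-- The second conjunct condition of `Φ^F`, corresponding to `ξ(v)`. -/
def CondB (T : Set (Asg V Val × Sys V Val)) (v : V) : Prop :=
  ∀ p ∈ T, ∀ t : Asg V Val, ival p.2 p.1 t v = p.1 v

theorem satG_eta (T : Set (Asg V Val × Sys V Val)) (F : Sys V Val) (v : V) :
    satG T (eta F v) ↔ CondA T F v := by
  unfold eta
  rw [satG_bigAnd]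
  constructor
  · intro h p hp t
    have h1 := h _ (List.mem_map.mpr ⟨t, by simp [allAsg, Finset.mem_toList], rfl⟩)
    rw [satG_cf] at h1
    have h2 := h1 (iconsistent_eqList _ _)
    rw [satG_eq] at h2
    have h3 := h2 _ (Set.mem_image_of_mem _ hp)
    rw [← doAsg_erase_self]
    exact h3
  · intro h χ hχ
    obtain ⟨t, -, rfl⟩ := List.mem_map.mp hχ
    rw [satG_cf]
    intro _
    rw [satG_eq]
    rintro q ⟨p, hp, rfl⟩
    show doAsg p.2 _ p.1 v = _
    rw [doAsg_erase_self]
    exact h p hp t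

theorem satG_xi (T : Set (Asg V Val × Sys V Val)) (v : V) :
    satG T (xi v) ↔ CondB T v := by
  unfold xi
  rw [satG_bigAnd]
  constructor
  · intro h p hp t
    have h1 := h _ (List.mem_map.mpr ⟨p.1 v, by simp [Finset.mem_toList], rfl⟩)
    rw [satG_bigAnd] at h1
    have h2 := h1 _ (List.mem_map.mpr ⟨t, by simp [allAsg, Finset.mem_toList], rfl⟩)
    rw [satG_or] at h2
    obtain ⟨T1, T2, hun, hT1, hT2⟩ := h2
    have hpm : p ∈ T1 ∪ T2 := hun ▸ hp
    rcases hpm with h' | h'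
    · exact absurd (fun q hq => by cases hq; rfl : satG {p} (Fml.eq v (p.1 v))) (hT1 p h')
    · have h3 := hT2 (iconsistent_eqList _ _) _ (Set.mem_image_of_mem _ h')
      rw [← doAsg_erase_self]
      exact h3
  · intro h χ hχ
    obtain ⟨x, -, rfl⟩ := List.mem_map.mp hχ
    rw [satG_bigAnd]
    intro χ' hχ'
    obtain ⟨t, -, rfl⟩ := List.mem_map.mp hχ'
    rw [satG_or]
    refine ⟨{p | p ∈ T ∧ p.1 v ≠ x}, {p | p ∈ T ∧ p.1 v = x}, ?_, ?_, ?_⟩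
    · ext p
      constructor
      · rintro (⟨h1, -⟩ | ⟨h1, -⟩) <;> exact h1
      · intro hp
        by_cases hx : p.1 v = x
        · exact Or.inr ⟨hp, hx⟩
        · exact Or.inl ⟨hp, hx⟩
    · rintro p ⟨-, hne⟩ hs
      exact hne (hs p rfl)
    · intro _
      rintro q ⟨p, ⟨hp, hx⟩, rfl⟩
      show doAsg p.2 _ p.1 v = x
      rw [doAsg_erase_self, h p hp t]
      exact hx

theorem satG_Phi (T : Set (Asg V Val × Sys V Val)) (F : Sys V Val) :
    satG T (Phi F) ↔
      (∀ v ∈ F.En, CondA T F v) ∧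
      (∀ v ∈ ((Finset.univ : Finset V) \ F.En) ∪ Cn F, CondB T v) := by
  unfold Phi
  rw [satG_and, satG_bigAnd, satG_bigAnd]
  constructor
  · rintro ⟨h1, h2⟩
    refine ⟨fun v hv => (satG_eta T F v).mp
        (h1 _ (List.mem_map.mpr ⟨v, Finset.mem_toList.mpr hv, rfl⟩)),
      fun v hv => (satG_xi T v).mp
        (h2 _ (List.mem_map.mpr ⟨v, Finset.mem_toList.mpr hv, rfl⟩))⟩
  · rintro ⟨h1, h2⟩
    constructor
    · intro χ hχ
      obtain ⟨v, hv, rfl⟩ := List.mem_map.mp hχ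
      exact (satG_eta T F v).mpr (h1 v (Finset.mem_toList.mp hv))
    · intro χ hχ
      obtain ⟨v, hv, rfl⟩ := List.mem_map.mp hχ
      exact (satG_xi T v).mpr (h2 v (Finset.mem_toList.mp hv))

theorem fn_const_of_asg (F : Sys V Val) (v : V) (c : Val v)
    (h : ∀ t : Asg V Val, F.fn v (fun w _ => t w) = c) :
    ∀ p, F.fn v p = c := by
  intro p
  set t : Asg V Val := fun w => if hw : w ∈ F.pa v then p w hw else Classical.arbitrary _
    with ht
  have h2 := h t
  have e : (fun w (_ : w ∈ F.pa v) => t w) = p := by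
    funext w hw
    simp only [ht]
    exact dif_pos hw
  rwa [e] at h2

theorem mem_Cn {F : Sys V Val} {v : V} :
    v ∈ Cn F ↔ v ∈ F.En ∧ ∃ c : Val v, ∀ p, F.fn v p = c := Finset.mem_filter

theorem mem_strictEn {F : Sys V Val} {v : V} :
    v ∈ strictEn F ↔ v ∈ F.En ∧ v ∉ Cn F := Finset.mem_sdiff

/-- The trivial system of functions, with no endogenous variables. -/
def trivialSys : Sys V Val where
  En := ∅
  pa := fun _ => ∅
  fn := fun _ _ => Classical.arbitrary _
  recursive := by
    intro x hx
    cases hx with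
    | single h => exact absurd h.1 (Finset.notMem_empty _)
    | tail _ h => exact absurd h.1 (Finset.notMem_empty _)

end Helpers2

end CausalTeam
namespace CausalTeam

section Helpers3

variable {V : Type} [Fintype V] [DecidableEq V] [Nonempty V]
  {Val : V → Type} [∀ v, Fintype (Val v)] [∀ v, DecidableEq (Val v)] [∀ v, Nonempty (Val v)]

theorem agree_of_conds {T : Set (Asg V Val × Sys V Val)} {F : Sys V Val}
    (hA : ∀ v ∈ F.En, CondA T F v) {p : Asg V Val × Sys V Val} (hp : p ∈ T)
    {v : V} (hv : v ∈ strictEn F) :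
    v ∈ p.2.En ∧ ∀ t : Asg V Val, p.2.fn v (fun w _ => t w) = F.fn v (fun w _ => t w) := by
  obtain ⟨hvEn, hvCn⟩ := mem_strictEn.mp hv
  have h := hA v hvEn p hp
  by_cases hEn : v ∈ p.2.En
  · refine ⟨hEn, fun t => ?_⟩
    have h1 := h t
    unfold ival at h1
    rwa [dif_pos hEn] at h1
  · exfalso
    apply hvCn
    refine mem_Cn.mpr ⟨hvEn, p.1 v, fn_const_of_asg F v (p.1 v) fun t => ?_⟩
    have h1 := h t
    unfold ival at h1
    rw [dif_neg hEn] at h1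
    exact h1.symm

theorem strictEn_eq_of_conds {T : Set (Asg V Val × Sys V Val)} {F : Sys V Val}
    (hA : ∀ v ∈ F.En, CondA T F v)
    (hB : ∀ v ∈ ((Finset.univ : Finset V) \ F.En) ∪ Cn F, CondB T v)
    {p : Asg V Val × Sys V Val} (hp : p ∈ T) :
    strictEn p.2 = strictEn F := by
  ext v
  constructor
  · intro hv
    obtain ⟨hG, hCnG⟩ := mem_strictEn.mp hv
    by_contra hns
    have hmem : v ∈ ((Finset.univ : Finset V) \ F.En) ∪ Cn F := by
      rcases not_and_or.mp (fun hc => hns (mem_strictEn.mpr ⟨hc.1, hc.2⟩)) with h | h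
      · exact Finset.mem_union_left _ (Finset.mem_sdiff.mpr ⟨Finset.mem_univ v, h⟩)
      · exact Finset.mem_union_right _ (not_not.mp h)
    have h := hB v hmem p hp
    apply hCnG
    refine mem_Cn.mpr ⟨hG, p.1 v, fn_const_of_asg p.2 v (p.1 v) fun t => ?_⟩
    have h1 := h t
    unfold ival at h1
    rwa [dif_pos hG] at h1
  · intro hv
    obtain ⟨hEn, hagree⟩ := agree_of_conds hA hp hv
    refine mem_strictEn.mpr ⟨hEn, fun hCn => ?_⟩
    obtain ⟨-, c, hc⟩ := mem_Cn.mp hCn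
    have hvCn := (mem_strictEn.mp hv).2
    exact hvCn (mem_Cn.mpr ⟨(mem_strictEn.mp hv).1, c,
      fn_const_of_asg F v c fun t => (hagree t).symm.trans (hc _)⟩)

theorem simFn_of_agree {G H : Sys V Val} {v : V}
    (hG : ∀ t : Asg V Val, G.fn v (fun w _ => t w) = H.fn v (fun w _ => t w)) :
    SimFn G H v := by
  intro x y z
  set t : Asg V Val := fun w =>
    if h1 : w ∈ G.pa v ∩ H.pa v then x w h1
    else if h2 : w ∈ G.pa v \ H.pa v then y w h2
    else if h3 : w ∈ H.pa v \ G.pa v then z w h3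
    else Classical.arbitrary _ with ht
  have e1 : (fun w (hw : w ∈ G.pa v) =>
      if h : w ∈ H.pa v then x w (Finset.mem_inter.mpr ⟨hw, h⟩)
      else y w (Finset.mem_sdiff.mpr ⟨hw, h⟩)) = fun w (_ : w ∈ G.pa v) => t w := by
    funext w hw
    simp only [ht]
    by_cases h : w ∈ H.pa v
    · rw [dif_pos h, dif_pos (Finset.mem_inter.mpr ⟨hw, h⟩)]
    · rw [dif_neg h, dif_neg (fun hc => h (Finset.mem_inter.mp hc).2),
        dif_pos (Finset.mem_sdiff.mpr ⟨hw, h⟩)]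
  have e2 : (fun w (hw : w ∈ H.pa v) =>
      if h : w ∈ G.pa v then x w (Finset.mem_inter.mpr ⟨h, hw⟩)
      else z w (Finset.mem_sdiff.mpr ⟨hw, h⟩)) = fun w (_ : w ∈ H.pa v) => t w := by
    funext w hw
    simp only [ht]
    by_cases h : w ∈ G.pa v
    · rw [dif_pos h, dif_pos (Finset.mem_inter.mpr ⟨h, hw⟩)]
    · rw [dif_neg h, dif_neg (fun hc => h (Finset.mem_inter.mp hc).1),
        dif_neg (fun hc => h (Finset.mem_sdiff.mp hc).1),
        dif_pos (Finset.mem_sdiff.mpr ⟨hw, h⟩)]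
  rw [e1, e2]
  exact hG t

theorem sim_of_conds {T : Set (Asg V Val × Sys V Val)} {F : Sys V Val}
    (hA : ∀ v ∈ F.En, CondA T F v)
    (hB : ∀ v ∈ ((Finset.univ : Finset V) \ F.En) ∪ Cn F, CondB T v)
    {p q : Asg V Val × Sys V Val} (hp : p ∈ T) (hq : q ∈ T) :
    Sim p.2 q.2 := by
  have hsp := strictEn_eq_of_conds hA hB hp
  have hsq := strictEn_eq_of_conds hA hB hq
  refine ⟨hsp.trans hsq.symm, fun v hv => ?_⟩
  have hvF : v ∈ strictEn F := hsp ▸ hv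
  obtain ⟨-, hgp⟩ := agree_of_conds hA hp hvF
  obtain ⟨-, hgq⟩ := agree_of_conds hA hq hvF
  exact simFn_of_agree fun t => (hgp t).trans (hgq t).symm

end Helpers3

end CausalTeam
namespace CausalTeam

section Helpers4

variable {V : Type} [Fintype V] [DecidableEq V] [Nonempty V]
  {Val : V → Type} [∀ v, Fintype (Val v)] [∀ v, DecidableEq (Val v)] [∀ v, Nonempty (Val v)]

/-- Restriction of a system of functions to its non-constant endogenous variables. -/
def Fof (F₀ : Sys V Val) : Sys V Val where
  En := strictEn F₀
  pa := F₀.pa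
  fn := F₀.fn
  recursive := by
    intro x hx
    exact F₀.recursive x (Relation.TransGen.mono
      (fun a b h => ⟨(Finset.mem_sdiff.mp h.1).1, h.2⟩) x x hx)

theorem simFn_apply {G H : Sys V Val} {v : V} (h : SimFn G H v) (t : Asg V Val) :
    G.fn v (fun w _ => t w) = H.fn v (fun w _ => t w) := by
  have h1 := h (fun w _ => t w) (fun w _ => t w) (fun w _ => t w)
  have e1 : (fun w (hw : w ∈ G.pa v) =>
      if h : w ∈ H.pa v then (fun w _ => t w) w (Finset.mem_inter.mpr ⟨hw, h⟩)
      else (fun w _ => t w) w (Finset.mem_sdiff.mpr ⟨hw, h⟩)) = fun w (_ : w ∈ G.pa v) => t w := by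
    funext w hw
    by_cases h : w ∈ H.pa v
    · rw [dif_pos h]
    · rw [dif_neg h]
  have e2 : (fun w (hw : w ∈ H.pa v) =>
      if h : w ∈ G.pa v then (fun w _ => t w) w (Finset.mem_inter.mpr ⟨h, hw⟩)
      else (fun w _ => t w) w (Finset.mem_sdiff.mpr ⟨hw, h⟩)) = fun w (_ : w ∈ H.pa v) => t w := by
    funext w hw
    by_cases h : w ∈ G.pa v
    · rw [dif_pos h]
    · rw [dif_neg h]
  rwa [e1, e2] at h1

theorem condA_of_uniform {T : Set (Asg V Val × Sys V Val)}
    (hU : ∀ p ∈ T, ∀ q ∈ T, Sim p.2 q.2)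
    {p₀ : Asg V Val × Sys V Val} (hp₀ : p₀ ∈ T) :
    ∀ v ∈ (Fof p₀.2).En, CondA T (Fof p₀.2) v := by
  intro v hv p hp t
  obtain ⟨hsEq, hSim⟩ := hU p hp p₀ hp₀
  have hv' : v ∈ strictEn p.2 := hsEq ▸ hv
  have hEn : v ∈ p.2.En := (mem_strictEn.mp hv').1
  unfold ival
  rw [dif_pos hEn]
  exact simFn_apply (hSim v hv') t

theorem condB_of_uniform {T : Set (Asg V Val × Sys V Val)} (hok : GTOk T)
    (hU : ∀ p ∈ T, ∀ q ∈ T, Sim p.2 q.2)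
    {p₀ : Asg V Val × Sys V Val} (hp₀ : p₀ ∈ T) :
    ∀ v ∈ ((Finset.univ : Finset V) \ (Fof p₀.2).En) ∪ Cn (Fof p₀.2), CondB T v := by
  intro v hv p hp t
  unfold ival
  by_cases hEn : v ∈ p.2.En
  · rw [dif_pos hEn]
    obtain ⟨hsEq, -⟩ := hU p hp p₀ hp₀
    -- v is not in strictEn p.2
    have hns : v ∉ strictEn p.2 := by
      intro hstr
      have hstr0 : v ∈ strictEn p₀.2 := hsEq ▸ hstr
      rcases Finset.mem_union.mp hv with h | h
      · exact (Finset.mem_sdiff.mp h).2 hstr0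
      · -- v ∈ Cn (Fof p₀.2) : fn constant, contradicting v ∈ strictEn p₀.2
        obtain ⟨-, c, hc⟩ := mem_Cn.mp h
        exact (mem_strictEn.mp hstr0).2 (mem_Cn.mpr ⟨(mem_strictEn.mp hstr0).1, c, hc⟩)
    have hCn : v ∈ Cn p.2 := by
      by_contra hc
      exact hns (mem_strictEn.mpr ⟨hEn, hc⟩)
    obtain ⟨-, c, hc⟩ := mem_Cn.mp hCn
    rw [hc]
    have hcompat := hok p hp v hEn
    rw [hcompat, hc]
  · rw [dif_neg hEn]

end Helpers4

end CausalTeam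
open CausalTeam

/-- **Characterization of uniformity**: a recursive generalized causal team satisfies the
intuitionistic disjunction of the formulas `Φ^F`, `F` ranging over all systems of
functions over the signature, iff it is uniform. -/
theorem uniformity_characterization {V : Type} [Fintype V] [DecidableEq V] [Nonempty V]
    {Val : V → Type} [∀ v, Fintype (Val v)] [∀ v, DecidableEq (Val v)] [∀ v, Nonempty (Val v)]
    (T : Set (Asg V Val × Sys V Val)) (hok : GTOk T)
    (L : List (Sys V Val)) (hL : ∀ F : Sys V Val, F ∈ L) :
    satG T (bigIor (L.map Phi)) ↔ ∀ p ∈ T, ∀ q ∈ T, Sim p.2 q.2 := by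
  have hLne : L.map Phi ≠ [] := by
    intro h
    rw [List.map_eq_nil_iff] at h
    exact absurd (h ▸ hL trivialSys) List.not_mem_nil
  rw [satG_bigIor _ _ hLne]
  constructor
  · rintro ⟨χ, hχ, hsat⟩
    obtain ⟨F, -, rfl⟩ := List.mem_map.mp hχ
    obtain ⟨hA, hB⟩ := (satG_Phi T F).mp hsat
    intro p hp q hq
    exact sim_of_conds hA hB hp hq
  · intro hU
    rcases Set.eq_empty_or_nonempty T with rfl | ⟨p₀, hp₀⟩
    · exact ⟨Phi trivialSys, List.mem_map_of_mem (hL _),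
        (satG_Phi ∅ _).mpr ⟨fun v _ p hp => absurd hp (Set.notMem_empty p),
          fun v _ p hp => absurd hp (Set.notMem_empty p)⟩⟩
    · exact ⟨Phi (Fof p₀.2), List.mem_map_of_mem (hL _),
        (satG_Phi T _).mpr ⟨condA_of_uniform hU hp₀, condB_of_uniform hok hU hp₀⟩⟩
end
end

section
/- Disjunction property over generalized causal teams: Let Δ be a set of CO[σ]-formulas and φ, ψ be formulas of CO⩗[σ] (or COD[σ]). If Δ ⊨^g φ ⩗ ψ, then Δ ⊨^g φ or Δ ⊨^g ψ. In particular, if ⊨^g φ ⩗ ψ then ⊨^g φ or ⊨^g ψ. -/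
open scoped Classical
set_option linter.unusedSectionVars false

noncomputable section

variable {V : Type} [Fintype V] [DecidableEq V] [Nonempty V]
  {Val : V → Type} [∀ v, Fintype (Val v)] [∀ v, DecidableEq (Val v)] [∀ v, Nonempty (Val v)]

open CausalTeam

section Aux

variable {V : Type} [Fintype V] [DecidableEq V] [Nonempty V]
  {Val : V → Type} [∀ v, Fintype (Val v)] [∀ v, DecidableEq (Val v)] [∀ v, Nonempty (Val v)]

/-- Downward closure: satisfaction over generalized causal teams is preserved
by passing to subteams, for every formula. -/
theorem satG_mono {α : Fml V Val} :
    ∀ {T T' : Set (Asg V Val × Sys V Val)}, T ⊆ T' → satG T' α → satG T α := by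
  induction α with
  | eq v x =>
    intro T T' hsub h p hp
    exact h p (hsub hp)
  | dep X Y =>
    intro T T' hsub h p hp q hq hpq
    exact h p (hsub hp) q (hsub hq) hpq
  | neg φ ih =>
    intro T T' hsub h p hp
    exact h p (hsub hp)
  | and φ ψ ihφ ihψ =>
    intro T T' hsub h
    exact ⟨ihφ hsub h.1, ihψ hsub h.2⟩
  | or φ ψ ihφ ihψ =>
    intro T T' hsub h
    obtain ⟨A, B, hAB, hA, hB⟩ := h
    refine ⟨A ∩ T, B ∩ T, ?_, ihφ Set.inter_subset_left hA, ihψ Set.inter_subset_left hB⟩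
    rw [← Set.union_inter_distrib_right, hAB]
    exact Set.inter_eq_self_of_subset_right hsub
  | ior φ ψ ihφ ihψ =>
    intro T T' hsub h
    rcases h with h | h
    · exact Or.inl (ihφ hsub h)
    · exact Or.inr (ihψ hsub h)
  | cf I φ ih =>
    intro T T' hsub h hI
    exact ih (Set.image_mono hsub) (h hI)

/-- Union closure for CO-formulas over generalized causal teams. -/
theorem satG_union {α : Fml V Val} (hα : IsCO α) :
    ∀ {T1 T2 : Set (Asg V Val × Sys V Val)},
      satG T1 α → satG T2 α → satG (T1 ∪ T2) α := by
  induction hα with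
  | eq v x =>
    rintro T1 T2 h1 h2 p (hp | hp)
    · exact h1 p hp
    · exact h2 p hp
  | neg hφ =>
    rintro T1 T2 h1 h2 p (hp | hp)
    · exact h1 p hp
    · exact h2 p hp
  | and hφ hψ ihφ ihψ =>
    intro T1 T2 h1 h2
    exact ⟨ihφ h1.1 h2.1, ihψ h1.2 h2.2⟩
  | or hφ hψ ihφ ihψ =>
    intro T1 T2 h1 h2
    obtain ⟨A, B, hAB, hA, hB⟩ := h1
    obtain ⟨A', B', hAB', hA', hB'⟩ := h2
    refine ⟨A ∪ A', B ∪ B', ?_, ihφ hA hA', ihψ hB hB'⟩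
    rw [← hAB, ← hAB']
    ac_rfl
  | cf I hφ ih =>
    intro T1 T2 h1 h2 hI
    rw [Set.image_union]
    exact ih (h1 hI) (h2 hI)

end Aux

/-- **Disjunction property over generalized causal teams**: if a set `Δ` of
CO[σ]-formulas entails `φ ⩗ ψ` over recursive generalized causal teams, then it
entails `φ` or it entails `ψ`. -/
theorem disjunction_property {V : Type} [Fintype V] [DecidableEq V] [Nonempty V]
    {Val : V → Type} [∀ v, Fintype (Val v)] [∀ v, DecidableEq (Val v)] [∀ v, Nonempty (Val v)]
    (Δ : Set (Fml V Val)) (hΔ : ∀ δ ∈ Δ, IsCO δ)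
    (φ ψ : Fml V Val) (hφ : IsCOV φ ∨ IsCOD φ) (hψ : IsCOV ψ ∨ IsCOD ψ)
    (h : ∀ T : Set (Asg V Val × Sys V Val), GTOk T →
        (∀ δ ∈ Δ, satG T δ) → satG T (Fml.ior φ ψ)) :
    (∀ T : Set (Asg V Val × Sys V Val), GTOk T → (∀ δ ∈ Δ, satG T δ) → satG T φ) ∨
    (∀ T : Set (Asg V Val × Sys V Val), GTOk T → (∀ δ ∈ Δ, satG T δ) → satG T ψ) := by
  by_contra hcon
  push_neg at hcon
  obtain ⟨⟨T1, h1ok, h1Δ, h1φ⟩, ⟨T2, h2ok, h2Δ, h2ψ⟩⟩ := hcon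
  have hok : GTOk (T1 ∪ T2) := by
    rintro p (hp | hp)
    · exact h1ok p hp
    · exact h2ok p hp
  have hΔ' : ∀ δ ∈ Δ, satG (T1 ∪ T2) δ := fun δ hδ =>
    satG_union (hΔ δ hδ) (h1Δ δ hδ) (h2Δ δ hδ)
  rcases h (T1 ∪ T2) hok hΔ' with hf | hf
  · exact h1φ (satG_mono Set.subset_union_left hf)
  · exact h2ψ (satG_mono Set.subset_union_right hf)
end
end

section
/- Resolution normal form: For every CO⩗[σ]-formula φ, φ and ⩗R(φ) (the intuitionistic disjunction of the finite set R(φ) of resolutions of φ) are interderivable in the natural deduction system for CO⩗[σ]: φ ⊢ ⩗R(φ) and ⩗R(φ) ⊢ φ. -/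
open scoped Classical
set_option linter.unusedSectionVars false

noncomputable section

variable {V : Type} [Fintype V] [DecidableEq V] [Nonempty V]
  {Val : V → Type} [∀ v, Fintype (Val v)] [∀ v, DecidableEq (Val v)] [∀ v, Nonempty (Val v)]

namespace CausalTeam

/-- Counterfactual-free formulas. -/
inductive CfFree : Fml V Val → Prop where
  | eq (v : V) (x : Val v) : CfFree (Fml.eq v x)
  | dep (X : List V) (Y : V) : CfFree (Fml.dep X Y)
  | neg {φ} : CfFree φ → CfFree (Fml.neg φ)
  | and {φ ψ} : CfFree φ → CfFree ψ → CfFree (Fml.and φ ψ)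
  | or {φ ψ} : CfFree φ → CfFree ψ → CfFree (Fml.or φ ψ)
  | ior {φ ψ} : CfFree φ → CfFree ψ → CfFree (Fml.ior φ ψ)

/-- The formula `X ⇝ Y` ("X causally affects Y"). -/
def leads (X Y : V) : Fml V Val :=
  bigOr (((Finset.univ : Finset (Finset V)).toList.filter (fun Z => X ∉ Z ∧ Y ∉ Z)).flatMap
    (fun Z => allAsg.flatMap (fun t =>
      (Finset.univ : Finset (Val X)).toList.flatMap (fun x =>
        (Finset.univ : Finset (Val X)).toList.flatMap (fun x' =>
          (Finset.univ : Finset (Val Y)).toList.flatMap (fun y =>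
            (Finset.univ : Finset (Val Y)).toList.filterMap (fun y' =>
              if x ≠ x' ∧ y ≠ y' then
                some (Fml.cf (eqList Z t)
                  (Fml.and (Fml.cf [⟨X, x⟩] (Fml.eq Y y))
                    (Fml.cf [⟨X, x'⟩] (Fml.eq Y y'))))
              else none)))))))

/-- The set of resolutions `R(φ)` of a CO⩗[σ]-formula. -/
def Res : Fml V Val → List (Fml V Val)
  | Fml.eq v x => [Fml.eq v x]
  | Fml.dep X Y => [Fml.dep X Y]
  | Fml.neg φ => [Fml.neg φ]
  | Fml.and φ ψ => (Res φ).flatMap (fun a => (Res ψ).map (fun b => Fml.and a b))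
  | Fml.or φ ψ => (Res φ).flatMap (fun a => (Res ψ).map (fun b => Fml.or a b))
  | Fml.ior φ ψ => Res φ ++ Res ψ
  | Fml.cf I φ => (Res φ).map (fun a => Fml.cf I a)

/-- The natural deduction system for CO⩗[σ]: `Deriv Γ φ` means `Γ ⊢ φ`. -/
inductive Deriv : Set (Fml V Val) → Fml V Val → Prop where
  | hyp {Γ} {φ} : φ ∈ Γ → Deriv Γ φ
  | valDef {Γ} (X : V) :
      Deriv Γ (bigOr ((Finset.univ : Finset (Val X)).toList.map (fun x => Fml.eq X x)))
  | valUnq {Γ} {X : V} {x x' : Val X} :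
      Deriv Γ (Fml.eq X x) → x ≠ x' → Deriv Γ (Fml.neg (Fml.eq X x'))
  | andI {Γ} {φ ψ} : Deriv Γ φ → Deriv Γ ψ → Deriv Γ (Fml.and φ ψ)
  | andE1 {Γ} {φ ψ} : Deriv Γ (Fml.and φ ψ) → Deriv Γ φ
  | andE2 {Γ} {φ ψ} : Deriv Γ (Fml.and φ ψ) → Deriv Γ ψ
  | orI1 {Γ} {φ ψ} : Deriv Γ φ → Deriv Γ (Fml.or φ ψ)
  | orI2 {Γ} {φ ψ} : Deriv Γ φ → Deriv Γ (Fml.or ψ φ)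
  | orE {Γ} {φ ψ α} : IsCO α → Deriv Γ (Fml.or φ ψ) →
      Deriv (insert φ Γ) α → Deriv (insert ψ Γ) α → Deriv Γ α
  | negI {Γ} {α} : IsCO α → Deriv (insert α Γ) fBot → Deriv Γ (Fml.neg α)
  | negE {Γ} {α φ} : Deriv Γ α → Deriv Γ (Fml.neg α) → Deriv Γ φ
  | raa {Γ} {α} : IsCO α → Deriv (insert (Fml.neg α) Γ) fBot → Deriv Γ α
  | cfEff {Γ} (I : List ((v : V) × Val v)) (Y : V) (y : Val Y) :
      Deriv Γ (Fml.cf (I ++ [⟨Y, y⟩]) (Fml.eq Y y))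
  | cfCmp {Γ} {γ} {I : List ((v : V) × Val v)} {W : V} {w : Val W} : CfFree γ →
      Deriv Γ (Fml.cf I (Fml.eq W w)) → Deriv Γ (Fml.cf I γ) →
      Deriv Γ (Fml.cf (I ++ [⟨W, w⟩]) γ)
  | cfBotE {Γ} {I} {φ} : Deriv Γ (Fml.cf I fBot) → Deriv Γ φ
  | botCfE {Γ} {φ} (I : List ((v : V) × Val v)) {X : V} {x x' : Val X} : x ≠ x' →
      Deriv Γ (Fml.cf (I ++ [⟨X, x⟩, ⟨X, x'⟩]) φ)
  | cfCtr {Γ} {φ} {X : V} {x : Val X} {I} :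
      Deriv Γ (Fml.cf (⟨X, x⟩ :: ⟨X, x⟩ :: I) φ) → Deriv Γ (Fml.cf (⟨X, x⟩ :: I) φ)
  | cfWk {Γ} {φ} {X : V} {x : Val X} {I} :
      Deriv Γ (Fml.cf (⟨X, x⟩ :: I) φ) → Deriv Γ (Fml.cf (⟨X, x⟩ :: ⟨X, x⟩ :: I) φ)
  | cfSub {Γ} {φ ψ} {I} : Deriv Γ (Fml.cf I φ) →
      Deriv ({φ} : Set (Fml V Val)) ψ → Deriv Γ (Fml.cf I ψ)
  | cfAndI {Γ} {φ ψ} {I} : Deriv Γ (Fml.cf I φ) → Deriv Γ (Fml.cf I ψ) →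
      Deriv Γ (Fml.cf I (Fml.and φ ψ))
  | cfOrDst1 {Γ} {φ ψ} {I} : Deriv Γ (Fml.cf I (Fml.or φ ψ)) →
      Deriv Γ (Fml.or (Fml.cf I φ) (Fml.cf I ψ))
  | cfOrDst2 {Γ} {φ ψ} {I} : Deriv Γ (Fml.or (Fml.cf I φ) (Fml.cf I ψ)) →
      Deriv Γ (Fml.cf I (Fml.or φ ψ))
  | cfExtr {Γ} {φ} {I J : List ((v : V) × Val v)} : IConsistent I →
      Deriv Γ (Fml.cf I (Fml.cf J φ)) →
      Deriv Γ (Fml.cf ((I.filter (fun p => p.1 ∉ ikeys J)) ++ J) φ)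
  | cfExp {Γ} {φ} {I J : List ((v : V) × Val v)} : (∀ p ∈ I, ∀ q ∈ J, p.1 ≠ q.1) →
      Deriv Γ (Fml.cf (I ++ J) φ) → Deriv Γ (Fml.cf I (Fml.cf J φ))
  | negCfE {Γ} {α} {I} : Deriv Γ (Fml.neg (Fml.cf I α)) → Deriv Γ (Fml.cf I (Fml.neg α))
  | recur {Γ} (Xs : List V) (X Y : V) : Xs.Nodup → Xs.head? = some X →
      Xs.getLast? = some Y →
      (∀ i : ℕ, ∀ hi : i + 1 < Xs.length,
        Deriv Γ (leads (Xs.get ⟨i, Nat.lt_of_succ_lt hi⟩) (Xs.get ⟨i + 1, hi⟩))) →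
      Deriv Γ (Fml.neg (leads Y X))
  | orCom {Γ} {φ ψ} : Deriv Γ (Fml.or φ ψ) → Deriv Γ (Fml.or ψ φ)
  | orAss {Γ} {φ ψ χ} : Deriv Γ (Fml.or (Fml.or φ ψ) χ) →
      Deriv Γ (Fml.or φ (Fml.or ψ χ))
  | orSub {Γ} {φ ψ χ} : Deriv Γ (Fml.or φ ψ) →
      Deriv ({φ} : Set (Fml V Val)) χ → Deriv Γ (Fml.or χ ψ)
  | iorI1 {Γ} {φ ψ} : Deriv Γ φ → Deriv Γ (Fml.ior φ ψ)
  | iorI2 {Γ} {φ ψ} : Deriv Γ φ → Deriv Γ (Fml.ior ψ φ)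
  | iorE {Γ} {φ ψ χ} : Deriv Γ (Fml.ior φ ψ) →
      Deriv (insert φ Γ) χ → Deriv (insert ψ Γ) χ → Deriv Γ χ
  | orIorDst {Γ} {φ ψ χ} : Deriv Γ (Fml.or φ (Fml.ior ψ χ)) →
      Deriv Γ (Fml.ior (Fml.or φ ψ) (Fml.or φ χ))
  | cfIorDst {Γ} {ψ χ} {I} : Deriv Γ (Fml.cf I (Fml.ior ψ χ)) →
      Deriv Γ (Fml.ior (Fml.cf I ψ) (Fml.cf I χ))

end CausalTeam

open CausalTeam

namespace CausalTeam

variable {V : Type} [Fintype V] [DecidableEq V] [Nonempty V]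
  {Val : V → Type} [∀ v, Fintype (Val v)] [∀ v, DecidableEq (Val v)] [∀ v, Nonempty (Val v)]

theorem Deriv.wk {Γ Γ' : Set (Fml V Val)} {φ : Fml V Val} (h : Deriv Γ φ) (hs : Γ ⊆ Γ') :
    Deriv Γ' φ := by
  induction h generalizing Γ' with
  | hyp h => exact Deriv.hyp (hs h)
  | valDef X => exact Deriv.valDef X
  | valUnq _ hne ih => exact Deriv.valUnq (ih hs) hne
  | andI _ _ ih1 ih2 => exact Deriv.andI (ih1 hs) (ih2 hs)
  | andE1 _ ih => exact Deriv.andE1 (ih hs)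
  | andE2 _ ih => exact Deriv.andE2 (ih hs)
  | orI1 _ ih => exact Deriv.orI1 (ih hs)
  | orI2 _ ih => exact Deriv.orI2 (ih hs)
  | orE hco _ _ _ ih1 ih2 ih3 =>
      exact Deriv.orE hco (ih1 hs) (ih2 (Set.insert_subset_insert hs))
        (ih3 (Set.insert_subset_insert hs))
  | negI hco _ ih => exact Deriv.negI hco (ih (Set.insert_subset_insert hs))
  | negE _ _ ih1 ih2 => exact Deriv.negE (ih1 hs) (ih2 hs)
  | raa hco _ ih => exact Deriv.raa hco (ih (Set.insert_subset_insert hs))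
  | cfEff I Y y => exact Deriv.cfEff I Y y
  | cfCmp hcf _ _ ih1 ih2 => exact Deriv.cfCmp hcf (ih1 hs) (ih2 hs)
  | cfBotE _ ih => exact Deriv.cfBotE (ih hs)
  | botCfE I hne => exact Deriv.botCfE I hne
  | cfCtr _ ih => exact Deriv.cfCtr (ih hs)
  | cfWk _ ih => exact Deriv.cfWk (ih hs)
  | cfSub _ h2 ih => exact Deriv.cfSub (ih hs) h2
  | cfAndI _ _ ih1 ih2 => exact Deriv.cfAndI (ih1 hs) (ih2 hs)
  | cfOrDst1 _ ih => exact Deriv.cfOrDst1 (ih hs)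
  | cfOrDst2 _ ih => exact Deriv.cfOrDst2 (ih hs)
  | cfExtr hc _ ih => exact Deriv.cfExtr hc (ih hs)
  | cfExp hd _ ih => exact Deriv.cfExp hd (ih hs)
  | negCfE _ ih => exact Deriv.negCfE (ih hs)
  | recur Xs X Y hnd hh hl _ ih =>
      exact Deriv.recur Xs X Y hnd hh hl (fun i hi => ih i hi hs)
  | orCom _ ih => exact Deriv.orCom (ih hs)
  | orAss _ ih => exact Deriv.orAss (ih hs)
  | orSub _ h2 ih => exact Deriv.orSub (ih hs) h2
  | iorI1 _ ih => exact Deriv.iorI1 (ih hs)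
  | iorI2 _ ih => exact Deriv.iorI2 (ih hs)
  | iorE _ _ _ ih1 ih2 ih3 =>
      exact Deriv.iorE (ih1 hs) (ih2 (Set.insert_subset_insert hs))
        (ih3 (Set.insert_subset_insert hs))
  | orIorDst _ ih => exact Deriv.orIorDst (ih hs)
  | cfIorDst _ ih => exact Deriv.cfIorDst (ih hs)

theorem Deriv.cut {Γ : Set (Fml V Val)} {φ ψ : Fml V Val}
    (h1 : Deriv Γ φ) (h2 : Deriv (insert φ Γ) ψ) : Deriv Γ ψ :=
  Deriv.iorE (φ := φ) (ψ := φ) (Deriv.iorI1 h1) h2 h2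

theorem Deriv.mp {Γ : Set (Fml V Val)} {φ ψ : Fml V Val}
    (h1 : Deriv Γ φ) (h2 : Deriv ({φ} : Set (Fml V Val)) ψ) : Deriv Γ ψ :=
  h1.cut (h2.wk (Set.singleton_subset_iff.mpr (Set.mem_insert _ _)))

theorem iorIntro {Γ : Set (Fml V Val)} {L : List (Fml V Val)} {α : Fml V Val}
    (hmem : α ∈ L) (h : Deriv Γ α) : Deriv Γ (bigIor L) := by
  induction L with
  | nil => simp at hmem
  | cons a rest ih =>
    match rest with
    | [] => simp at hmem; subst hmem; exact h
    | b :: r =>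
      show Deriv Γ (Fml.ior a (bigIor (b :: r)))
      rcases List.mem_cons.mp hmem with h1 | h1
      · subst h1; exact Deriv.iorI1 h
      · exact Deriv.iorI2 (ih h1)

theorem iorElim {Γ : Set (Fml V Val)} {L : List (Fml V Val)} {χ : Fml V Val}
    (hne : L ≠ []) (h : Deriv Γ (bigIor L)) (hall : ∀ α ∈ L, Deriv (insert α Γ) χ) :
    Deriv Γ χ := by
  induction L generalizing Γ with
  | nil => exact absurd rfl hne
  | cons a rest ih =>
    match rest with
    | [] => exact Deriv.cut h (hall a (by simp))
    | b :: r =>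
      have h' : Deriv Γ (Fml.ior a (bigIor (b :: r))) := h
      refine Deriv.iorE h' (hall a (by simp)) ?_
      exact ih (by simp) (Deriv.hyp (Set.mem_insert _ _))
        (fun α hα => (hall α (by simp [hα])).wk
          (Set.insert_subset_insert (Set.subset_insert _ _)))

theorem orIorElim {Γ : Set (Fml V Val)} {M : List (Fml V Val)} {χ τ : Fml V Val}
    (hne : M ≠ []) (h : Deriv Γ (Fml.or χ (bigIor M)))
    (hall : ∀ m ∈ M, Deriv (insert (Fml.or χ m) Γ) τ) : Deriv Γ τ := by
  induction M generalizing Γ with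
  | nil => exact absurd rfl hne
  | cons a rest ih =>
    match rest with
    | [] => exact Deriv.cut h (hall a (by simp))
    | b :: r =>
      have h' : Deriv Γ (Fml.or χ (Fml.ior a (bigIor (b :: r)))) := h
      refine Deriv.iorE (Deriv.orIorDst h') (hall a (by simp)) ?_
      exact ih (by simp) (Deriv.hyp (Set.mem_insert _ _))
        (fun m hm => (hall m (by simp [hm])).wk
          (Set.insert_subset_insert (Set.subset_insert _ _)))

theorem cfBigIor {Γ : Set (Fml V Val)} {I : List ((v : V) × Val v)}
    {L : List (Fml V Val)} (hne : L ≠ [])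
    (h : Deriv Γ (Fml.cf I (bigIor L))) : Deriv Γ (bigIor (L.map (Fml.cf I))) := by
  induction L generalizing Γ with
  | nil => exact absurd rfl hne
  | cons a rest ih =>
    match rest with
    | [] => exact h
    | b :: r =>
      have h' : Deriv Γ (Fml.cf I (Fml.ior a (bigIor (b :: r)))) := h
      show Deriv Γ (Fml.ior (Fml.cf I a) (bigIor ((b :: r).map (Fml.cf I))))
      refine Deriv.iorE (Deriv.cfIorDst h') ?_ ?_
      · exact Deriv.iorI1 (Deriv.hyp (Set.mem_insert _ _))
      · exact Deriv.iorI2 (ih (by simp) (Deriv.hyp (Set.mem_insert _ _)))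

theorem resMem {φ : Fml V Val} (h : IsCOV φ) : ∃ α, α ∈ Res φ := by
  induction h with
  | eq v x => exact ⟨Fml.eq v x, by simp [Res]⟩
  | @neg ψ1 _ => exact ⟨Fml.neg ψ1, by simp [Res]⟩
  | and _ _ ih1 ih2 =>
      obtain ⟨a, ha⟩ := ih1; obtain ⟨b, hb⟩ := ih2
      exact ⟨Fml.and a b, List.mem_flatMap.mpr ⟨a, ha, List.mem_map.mpr ⟨b, hb, rfl⟩⟩⟩
  | or _ _ ih1 ih2 =>
      obtain ⟨a, ha⟩ := ih1; obtain ⟨b, hb⟩ := ih2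
      exact ⟨Fml.or a b, List.mem_flatMap.mpr ⟨a, ha, List.mem_map.mpr ⟨b, hb, rfl⟩⟩⟩
  | ior _ _ ih1 ih2 =>
      obtain ⟨a, ha⟩ := ih1
      exact ⟨a, List.mem_append.mpr (Or.inl ha)⟩
  | cf I _ ih =>
      obtain ⟨a, ha⟩ := ih
      exact ⟨Fml.cf I a, List.mem_map.mpr ⟨a, ha, rfl⟩⟩

theorem resNe {φ : Fml V Val} (h : IsCOV φ) : Res φ ≠ [] := by
  obtain ⟨a, ha⟩ := resMem h; exact List.ne_nil_of_mem ha

theorem resToPhi {φ : Fml V Val} (h : IsCOV φ) :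
    ∀ α ∈ Res φ, Deriv ({α} : Set (Fml V Val)) φ := by
  induction h with
  | eq v x =>
      intro α hα; simp [Res] at hα; subst hα
      exact Deriv.hyp (Set.mem_singleton _)
  | neg _ =>
      intro α hα; simp [Res] at hα; subst hα
      exact Deriv.hyp (Set.mem_singleton _)
  | @and φ1 ψ1 _ _ ih1 ih2 =>
      intro α hα
      simp only [Res, List.mem_flatMap, List.mem_map] at hα
      obtain ⟨a, ha, b, hb, rfl⟩ := hα
      have h0 : Deriv ({Fml.and a b} : Set (Fml V Val)) (Fml.and a b) :=
        Deriv.hyp (Set.mem_singleton _)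
      exact Deriv.andI ((Deriv.andE1 h0).mp (ih1 a ha)) ((Deriv.andE2 h0).mp (ih2 b hb))
  | @or φ1 ψ1 _ _ ih1 ih2 =>
      intro α hα
      simp only [Res, List.mem_flatMap, List.mem_map] at hα
      obtain ⟨a, ha, b, hb, rfl⟩ := hα
      have h0 : Deriv ({Fml.or a b} : Set (Fml V Val)) (Fml.or a b) :=
        Deriv.hyp (Set.mem_singleton _)
      exact Deriv.orCom (Deriv.orSub (Deriv.orCom (Deriv.orSub h0 (ih1 a ha))) (ih2 b hb))
  | ior _ _ ih1 ih2 =>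
      intro α hα
      rcases List.mem_append.mp hα with h1 | h1
      · exact Deriv.iorI1 (ih1 α h1)
      · exact Deriv.iorI2 (ih2 α h1)
  | cf I _ ih =>
      intro α hα
      simp only [Res, List.mem_map] at hα
      obtain ⟨a, ha, rfl⟩ := hα
      exact Deriv.cfSub (Deriv.hyp (Set.mem_singleton _)) (ih a ha)

theorem phiToRes {φ : Fml V Val} (h : IsCOV φ) :
    ∀ {Γ : Set (Fml V Val)}, Deriv Γ φ → Deriv Γ (bigIor (Res φ)) := by
  induction h with
  | eq v x => exact fun hd => hd
  | neg _ => exact fun hd => hd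
  | and h1 h2 ih1 ih2 =>
      intro Γ hd
      refine iorElim (resNe h1) (ih1 (Deriv.andE1 hd)) ?_
      intro a ha
      refine iorElim (resNe h2) (ih2 ((Deriv.andE2 hd).wk (Set.subset_insert _ _))) ?_
      intro b hb
      refine iorIntro (List.mem_flatMap.mpr ⟨a, ha, List.mem_map.mpr ⟨b, hb, rfl⟩⟩) ?_
      exact Deriv.andI (Deriv.hyp (Set.mem_insert_of_mem _ (Set.mem_insert _ _)))
        (Deriv.hyp (Set.mem_insert _ _))
  | @or φ1 ψ1 h1 h2 ih1 ih2 =>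
      intro Γ hd
      have e1 : Deriv ({φ1} : Set (Fml V Val)) (bigIor (Res φ1)) :=
        ih1 (Deriv.hyp (Set.mem_singleton _))
      have e2 : Deriv ({ψ1} : Set (Fml V Val)) (bigIor (Res ψ1)) :=
        ih2 (Deriv.hyp (Set.mem_singleton _))
      have a4 : Deriv Γ (Fml.or (bigIor (Res φ1)) (bigIor (Res ψ1))) :=
        Deriv.orCom (Deriv.orSub (Deriv.orCom (Deriv.orSub hd e1)) e2)
      refine orIorElim (resNe h2) a4 ?_
      intro b hb
      have hb' : Deriv (insert (Fml.or (bigIor (Res φ1)) b) Γ)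
          (Fml.or b (bigIor (Res φ1))) :=
        Deriv.orCom (Deriv.hyp (Set.mem_insert _ _))
      refine orIorElim (resNe h1) hb' ?_
      intro a ha
      refine iorIntro (List.mem_flatMap.mpr ⟨a, ha, List.mem_map.mpr ⟨b, hb, rfl⟩⟩) ?_
      exact Deriv.orCom (Deriv.hyp (Set.mem_insert _ _))
  | ior h1 h2 ih1 ih2 =>
      intro Γ hd
      refine Deriv.iorE hd ?_ ?_
      · refine iorElim (resNe h1) (ih1 (Deriv.hyp (Set.mem_insert _ _))) ?_
        exact fun a ha => iorIntro (List.mem_append.mpr (Or.inl ha))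
          (Deriv.hyp (Set.mem_insert _ _))
      · refine iorElim (resNe h2) (ih2 (Deriv.hyp (Set.mem_insert _ _))) ?_
        exact fun a ha => iorIntro (List.mem_append.mpr (Or.inr ha))
          (Deriv.hyp (Set.mem_insert _ _))
  | @cf φ1 I h1 ih =>
      intro Γ hd
      exact cfBigIor (resNe h1) (Deriv.cfSub hd (ih (Deriv.hyp (Set.mem_singleton φ1))))

end CausalTeam

/-- **Resolution normal form**: every CO⩗[σ]-formula `φ` is interderivable with the
intuitionistic disjunction of its set of resolutions in the natural deduction system
for CO⩗[σ]. -/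
theorem resolution_normal_form {V : Type} [Fintype V] [DecidableEq V] [Nonempty V]
    {Val : V → Type} [∀ v, Fintype (Val v)] [∀ v, DecidableEq (Val v)] [∀ v, Nonempty (Val v)]
    (φ : Fml V Val) (hφ : IsCOV φ) :
    Deriv ({φ} : Set (Fml V Val)) (bigIor (Res φ)) ∧
      Deriv ({bigIor (Res φ)} : Set (Fml V Val)) φ := by
  constructor
  · exact phiToRes hφ (Deriv.hyp (Set.mem_singleton _))
  · exact iorElim (resNe hφ) (Deriv.hyp (Set.mem_singleton _))
      (fun α hα => (Deriv.hyp (Set.mem_insert _ _)).mp (resToPhi hφ α hα))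
end
end
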